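/- Under the hypotheses of the main theorem (p > 1, conjugate q, 0 ≤ α ≤ ρ, 0 < γ < σ ≤ 1), the following two inequalities are equivalent: (I) Σ_n ∫₀^∞ K(x,n) a_n f(x) dx < k(σ) ‖f‖_{p,Φ_δ} ‖a‖_{q,Ψ̃} for all admissible f, a; and (II) ( Σ_n (ν_n/Ṽ_n^{1−pσ}) [∫₀^∞ K(x,n) f(x) dx]^p )^{1/p} < k(σ) ‖f‖_{p,Φ_δ} for all admissible f, where K(x,n) = csch(ρ (U^δ(x) Ṽ_n)^γ)/e^{α (U^δ(x) Ṽ_n)^γ}. -/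

import Mathlib

open MeasureTheory Filter Set Topology

/-- U(x) = ∫₀ˣ μ(t) dt. -/
noncomputable def Ufun18 (μ : ℝ → ℝ) (x : ℝ) : ℝ := ∫ t in Set.Ioc (0:ℝ) x, μ t

/-- The kernel K(x,n) = csch(ρ(U^δ(x)Ṽ_n)^γ)/e^{α(U^δ(x)Ṽ_n)^γ}. -/
noncomputable def Ker18 (μ : ℝ → ℝ) (Vt : ℕ → ℝ) (ρ α γ δ : ℝ) (x : ℝ) (n : ℕ) : ℝ :=
  (2 / (Real.exp (ρ * ((Ufun18 μ x) ^ δ * Vt n) ^ γ)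
      - Real.exp (-(ρ * ((Ufun18 μ x) ^ δ * Vt n) ^ γ))))
    / Real.exp (α * ((Ufun18 μ x) ^ δ * Vt n) ^ γ)

/-- Φ_δ(x) = U(x)^{p(1−δσ)−1}/μ(x)^{p−1}. -/
noncomputable def Phi18 (μ : ℝ → ℝ) (p σ δ : ℝ) (x : ℝ) : ℝ :=
  (Ufun18 μ x) ^ (p * (1 - δ * σ) - 1) / μ x ^ (p - 1)

/-- Ψ̃(n) = Ṽ_n^{q(1−σ)−1}/ν_n^{q−1}. -/
noncomputable def Psi18 (ν Vt : ℕ → ℝ) (q σ : ℝ) (n : ℕ) : ℝ :=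
  Vt n ^ (q * (1 - σ) - 1) / ν n ^ (q - 1)

noncomputable def gker18 (ρ α γ : ℝ) (t : ℝ) : ℝ :=
  2 / (Real.exp (ρ * t ^ γ) - Real.exp (-(ρ * t ^ γ))) / Real.exp (α * t ^ γ)

lemma Ker18_eq_gker18 (μ : ℝ → ℝ) (Vt : ℕ → ℝ) (ρ α γ δ : ℝ) (x : ℝ) (n : ℕ) :
    Ker18 μ Vt ρ α γ δ x n = gker18 ρ α γ ((Ufun18 μ x) ^ δ * Vt n) := rfl

lemma aux18_exp_sub (N : ℕ) (hN : 1 ≤ N) {x : ℝ} (hx : 0 < x) :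
    x ^ N / (2 * (N:ℝ) ^ N) ≤ Real.exp x - Real.exp (-x) := by
  have hN1 : (1:ℝ) ≤ (N:ℝ) := by exact_mod_cast hN
  have hNN : (1:ℝ) ≤ (N:ℝ) ^ N := by
    calc (1:ℝ) = 1 ^ N := (one_pow N).symm
    _ ≤ (N:ℝ) ^ N := pow_le_pow_left₀ (by norm_num) hN1 N
  rcases le_total x 1 with h1 | h1
  · have h2 : x ^ N ≤ x := by
      calc x ^ N ≤ x ^ 1 := pow_le_pow_of_le_one hx.le h1 hN
      _ = x := pow_one x
    have h3 : x ^ N / (2 * (N:ℝ) ^ N) ≤ x ^ N :=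
      div_le_self (by positivity) (by linarith)
    have h4 : Real.exp (-x) ≤ 1 := by
      calc Real.exp (-x) ≤ Real.exp 0 := Real.exp_le_exp.mpr (by linarith)
      _ = 1 := Real.exp_zero
    have h5 := Real.add_one_le_exp x
    linarith
  · have hNne : (N:ℝ) ≠ 0 := by positivity
    have hex : x ^ N / (N:ℝ) ^ N ≤ Real.exp x := by
      have h0 : x / N ≤ Real.exp (x / N) := by linarith [Real.add_one_le_exp (x / N)]
      have h2 : (x / (N:ℝ)) ^ N ≤ (Real.exp (x / N)) ^ N :=
        pow_le_pow_left₀ (by positivity) h0 N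
      rw [div_pow, ← Real.exp_nat_mul] at h2
      have : (N:ℝ) * (x / N) = x := by field_simp
      rwa [this] at h2
    have he2 : (2:ℝ) ≤ Real.exp x := by
      have := Real.add_one_le_exp x; linarith
    have h4 : Real.exp (-x) ≤ 1 := by
      calc Real.exp (-x) ≤ Real.exp 0 := Real.exp_le_exp.mpr (by linarith)
      _ = 1 := Real.exp_zero
    have h6 : Real.exp x / 2 ≤ Real.exp x - 1 := by linarith
    have h7 : x ^ N / (2 * (N:ℝ) ^ N) = (x ^ N / (N:ℝ) ^ N) / 2 := by ring
    have h8 : (x ^ N / (N:ℝ) ^ N) / 2 ≤ Real.exp x / 2 := by linarith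
    linarith

lemma gker18_pos {ρ α γ : ℝ} (hρ : 0 < ρ) (hα : 0 ≤ α) (hγ : 0 < γ) {t : ℝ} (ht : 0 < t) :
    0 < gker18 ρ α γ t := by
  have hs : 0 < ρ * t ^ γ := mul_pos hρ (Real.rpow_pos_of_pos ht γ)
  have hd : Real.exp (-(ρ * t ^ γ)) < Real.exp (ρ * t ^ γ) :=
    Real.exp_lt_exp.mpr (by linarith)
  have : 0 < Real.exp (ρ * t ^ γ) - Real.exp (-(ρ * t ^ γ)) := by linarith
  exact div_pos (div_pos (by norm_num) this) (Real.exp_pos _)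

lemma gker18_anti {ρ α γ : ℝ} (hρ : 0 < ρ) (hα : 0 ≤ α) (hγ : 0 < γ) {s t : ℝ}
    (hs : 0 < s) (hst : s ≤ t) : gker18 ρ α γ t ≤ gker18 ρ α γ s := by
  have hsγ : (0:ℝ) < s ^ γ := Real.rpow_pos_of_pos hs γ
  have hr : s ^ γ ≤ t ^ γ := Real.rpow_le_rpow hs.le hst hγ.le
  have hds : 0 < Real.exp (ρ * s ^ γ) - Real.exp (-(ρ * s ^ γ)) := by
    have : -(ρ * s ^ γ) < ρ * s ^ γ := by nlinarith
    linarith [Real.exp_lt_exp.mpr this]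
  have hd1 : Real.exp (ρ * s ^ γ) - Real.exp (-(ρ * s ^ γ))
      ≤ Real.exp (ρ * t ^ γ) - Real.exp (-(ρ * t ^ γ)) := by
    have h1 : Real.exp (ρ * s ^ γ) ≤ Real.exp (ρ * t ^ γ) :=
      Real.exp_le_exp.mpr (by nlinarith)
    have h2 : Real.exp (-(ρ * t ^ γ)) ≤ Real.exp (-(ρ * s ^ γ)) :=
      Real.exp_le_exp.mpr (by nlinarith)
    linarith
  have he1 : Real.exp (α * s ^ γ) ≤ Real.exp (α * t ^ γ) :=
    Real.exp_le_exp.mpr (by nlinarith)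
  unfold gker18
  rw [div_div, div_div]
  apply div_le_div_of_nonneg_left (by norm_num)
  · exact mul_pos hds (Real.exp_pos _)
  · exact mul_le_mul hd1 he1 (Real.exp_pos _).le (by linarith)

lemma gker18_decay {ρ α γ : ℝ} (hρ : 0 < ρ) (hα : 0 ≤ α) (hγ : 0 < γ) (N : ℕ) (hN : 1 ≤ N)
    {t : ℝ} (ht : 0 < t) :
    gker18 ρ α γ t ≤ (4 * (N:ℝ) ^ N / ρ ^ N) / t ^ ((N:ℝ) * γ) := by
  have hsγ : (0:ℝ) < t ^ γ := Real.rpow_pos_of_pos ht γ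
  have hs : 0 < ρ * t ^ γ := mul_pos hρ hsγ
  have hlow := aux18_exp_sub N hN hs
  have hdpos : 0 < Real.exp (ρ * t ^ γ) - Real.exp (-(ρ * t ^ γ)) := by
    have : -(ρ * t ^ γ) < ρ * t ^ γ := by linarith
    linarith [Real.exp_lt_exp.mpr this]
  have hlow' : 0 < (ρ * t ^ γ) ^ N / (2 * (N:ℝ) ^ N) := by positivity
  have he1 : (1:ℝ) ≤ Real.exp (α * t ^ γ) := by
    rw [show (1:ℝ) = Real.exp 0 from Real.exp_zero.symm]
    exact Real.exp_le_exp.mpr (by positivity)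
  have step1 : gker18 ρ α γ t ≤ 2 / (Real.exp (ρ * t ^ γ) - Real.exp (-(ρ * t ^ γ))) := by
    unfold gker18
    exact div_le_self (by positivity) he1
  have step2 : 2 / (Real.exp (ρ * t ^ γ) - Real.exp (-(ρ * t ^ γ)))
      ≤ 2 / ((ρ * t ^ γ) ^ N / (2 * (N:ℝ) ^ N)) :=
    div_le_div_of_nonneg_left (by norm_num) hlow' hlow
  have hteq : t ^ ((N:ℝ) * γ) = (t ^ γ) ^ N := by
    rw [mul_comm, Real.rpow_mul ht.le, Real.rpow_natCast]
  have step3 : 2 / ((ρ * t ^ γ) ^ N / (2 * (N:ℝ) ^ N))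
      = (4 * (N:ℝ) ^ N / ρ ^ N) / t ^ ((N:ℝ) * γ) := by
    rw [hteq, mul_pow]
    field_simp
    ring
  calc gker18 ρ α γ t ≤ 2 / (Real.exp (ρ * t ^ γ) - Real.exp (-(ρ * t ^ γ))) := step1
  _ ≤ 2 / ((ρ * t ^ γ) ^ N / (2 * (N:ℝ) ^ N)) := step2
  _ = (4 * (N:ℝ) ^ N / ρ ^ N) / t ^ ((N:ℝ) * γ) := by rw [step3]

lemma sum18 (ν Vt : ℕ → ℝ) (p σ γ α ρ cm : ℝ)
    (hp : 1 < p) (hσ1 : σ ≤ 1) (hσ0 : 0 < σ)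
    (hρ : 0 < ρ) (hα : 0 ≤ α) (hγ : 0 < γ) (hcm : 0 < cm)
    (hν1 : ∀ n : ℕ, 1 ≤ n → 0 < ν n) (hVpos : ∀ n : ℕ, 1 ≤ n → 0 < Vt n)
    (hstep : ∀ n : ℕ, 1 ≤ n → Vt n + ν (n+1) / 2 ≤ Vt (n+1)) :
    Summable (fun n : ℕ => ν (n+1) / Vt (n+1) ^ (1 - p * σ)
      * gker18 ρ α γ (cm * Vt (n+1)) ^ p) := by
  have hp0 : (0:ℝ) < p := by linarith
  -- choice of N
  set N : ℕ := ⌈(σ + 1) / γ⌉₊ + 1 with hNdef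
  have hN1 : 1 ≤ N := Nat.le_add_left 1 _
  have hNγ : σ + 1 ≤ (N:ℝ) * γ := by
    have h1 : (σ + 1) / γ ≤ (⌈(σ + 1) / γ⌉₊ : ℝ) := Nat.le_ceil _
    have h2 : ((⌈(σ + 1) / γ⌉₊ : ℕ) : ℝ) ≤ (N : ℝ) := by
      rw [hNdef]; push_cast; linarith
    have h3 : (σ + 1) / γ * γ ≤ (N:ℝ) * γ :=
      mul_le_mul_of_nonneg_right (h1.trans h2) hγ.le
    rwa [div_mul_cancel₀ _ (ne_of_gt hγ)] at h3
  set C1 : ℝ := 4 * (N:ℝ) ^ N / ρ ^ N / cm ^ ((N:ℝ) * γ) with hC1def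
  have hC1 : 0 < C1 := by
    have : (0:ℝ) < cm ^ ((N:ℝ) * γ) := Real.rpow_pos_of_pos hcm _
    positivity
  -- bound for gker in terms of Vt
  have hgb : ∀ n : ℕ, 1 ≤ n → gker18 ρ α γ (cm * Vt n) ≤ C1 * Vt n ^ (-((N:ℝ) * γ)) := by
    intro n hn
    have hV := hVpos n hn
    have ht : 0 < cm * Vt n := mul_pos hcm hV
    have h := gker18_decay hρ hα hγ N hN1 ht
    have hmul : (cm * Vt n) ^ ((N:ℝ) * γ) = cm ^ ((N:ℝ) * γ) * Vt n ^ ((N:ℝ) * γ) :=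
      Real.mul_rpow hcm.le hV.le
    rw [hmul] at h
    calc gker18 ρ α γ (cm * Vt n)
        ≤ 4 * (N:ℝ) ^ N / ρ ^ N / (cm ^ ((N:ℝ) * γ) * Vt n ^ ((N:ℝ) * γ)) := h
    _ = C1 * Vt n ^ (-((N:ℝ) * γ)) := by
        rw [Real.rpow_neg hV.le, hC1def]
        field_simp
  -- the telescoping sequence
  set T : ℕ → ℝ := fun n => (Vt (n+1))⁻¹ with hTdef
  have hVmono : ∀ n : ℕ, 1 ≤ n → Vt n ≤ Vt (n+1) := by
    intro n hn
    have := hstep n hn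
    have := hν1 (n+1) (by omega)
    linarith
  have hTnonneg : ∀ n, 0 ≤ T n := fun n => inv_nonneg.2 (hVpos (n+1) (by omega)).le
  have hTele : Summable (fun n : ℕ => T n - T (n+1)) := by
    apply summable_of_sum_range_le (c := T 0)
    · intro n
      have h1 : Vt (n+1) ≤ Vt (n+2) := hVmono (n+1) (by omega)
      have h2 : 0 < Vt (n+1) := hVpos (n+1) (by omega)
      have := one_div_le_one_div_of_le h2 h1
      simp only [one_div] at this
      simp only [hTdef, sub_nonneg]
      exact this
    · intro n
      rw [Finset.sum_range_sub' T n]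
      have := hTnonneg n
      linarith
  -- exponent computation
  set E : ℝ := p * σ - 1 + -((N:ℝ) * γ) * p with hEdef
  have hE2 : E + 2 ≤ 0 := by
    have h1 : (σ + 1) * p ≤ ((N:ℝ) * γ) * p := mul_le_mul_of_nonneg_right hNγ hp0.le
    rw [hEdef]; nlinarith
  set v0 : ℝ := Vt 1 with hv0def
  have hv0 : 0 < v0 := hVpos 1 le_rfl
  set C2 : ℝ := 2 * (C1 ^ p * v0 ^ (E + 2)) with hC2def
  have hC2 : 0 ≤ C2 := by
    have h1 : (0:ℝ) < C1 ^ p := Real.rpow_pos_of_pos hC1 _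
    have h2 : (0:ℝ) < v0 ^ (E + 2) := Real.rpow_pos_of_pos hv0 _
    positivity
  have hmono1 : ∀ n : ℕ, Vt 1 ≤ Vt (n+1) := by
    intro n
    induction n with
    | zero => exact le_rfl
    | succ k ih => exact ih.trans (hVmono (k+1) (by omega))
  -- term bound at shifted index
  have hterm : ∀ n : ℕ, ν (n+2) / Vt (n+2) ^ (1 - p * σ)
      * gker18 ρ α γ (cm * Vt (n+2)) ^ p ≤ C2 * (T n - T (n+1)) := by
    intro n
    have hV2 : 0 < Vt (n+2) := hVpos (n+2) (by omega)
    have hV1 : 0 < Vt (n+1) := hVpos (n+1) (by omega)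
    have hVle : Vt (n+1) ≤ Vt (n+2) := hVmono (n+1) (by omega)
    have hg : 0 < gker18 ρ α γ (cm * Vt (n+2)) :=
      gker18_pos hρ hα hγ (mul_pos hcm hV2)
    -- weight as positive power
    have hW : ν (n+2) / Vt (n+2) ^ (1 - p * σ) = ν (n+2) * Vt (n+2) ^ (p * σ - 1) := by
      rw [show p * σ - 1 = -(1 - p * σ) by ring, Real.rpow_neg hV2.le, div_eq_mul_inv]
    -- gker power bound
    have hgp : gker18 ρ α γ (cm * Vt (n+2)) ^ p ≤ C1 ^ p * Vt (n+2) ^ (-((N:ℝ) * γ) * p) := by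
      have h1 := hgb (n+2) (by omega)
      have h2 : gker18 ρ α γ (cm * Vt (n+2)) ^ p ≤ (C1 * Vt (n+2) ^ (-((N:ℝ) * γ))) ^ p :=
        Real.rpow_le_rpow hg.le h1 hp0.le
      rwa [Real.mul_rpow hC1.le (Real.rpow_nonneg hV2.le _),
        ← Real.rpow_mul hV2.le] at h2
    have hνb : ν (n+2) ≤ 2 * (Vt (n+2) - Vt (n+1)) := by
      have := hstep (n+1) (by omega); linarith
    have hνpos := hν1 (n+2) (by omega)
    -- combine exponents
    have hcomb : Vt (n+2) ^ (p * σ - 1) * Vt (n+2) ^ (-((N:ℝ) * γ) * p) = Vt (n+2) ^ E := by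
      rw [← Real.rpow_add hV2, hEdef]
    have hsplit : Vt (n+2) ^ E = Vt (n+2) ^ (E + 2) * Vt (n+2) ^ (-2 : ℝ) := by
      rw [← Real.rpow_add hV2]; ring_nf
    have hbase : Vt (n+2) ^ (E + 2) ≤ v0 ^ (E + 2) := by
      exact Real.rpow_le_rpow_of_nonpos hv0 ((hmono1 n).trans hVle) hE2
    have hinvsq : Vt (n+2) ^ (-2 : ℝ) = (Vt (n+2) ^ (2:ℕ))⁻¹ := by
      rw [show (-2 : ℝ) = -((2:ℕ):ℝ) by norm_num, Real.rpow_neg hV2.le, Real.rpow_natCast]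
    have hkey : (Vt (n+2) - Vt (n+1)) * (Vt (n+2) ^ (2:ℕ))⁻¹ ≤ T n - T (n+1) := by
      have heq : T n - T (n+1) = (Vt (n+2) - Vt (n+1)) / (Vt (n+1) * Vt (n+2)) := by
        simp only [hTdef]; rw [inv_sub_inv hV1.ne' hV2.ne']
      rw [heq, ← div_eq_mul_inv]
      have h4 : 0 < Vt (n+1) * Vt (n+2) := mul_pos hV1 hV2
      have h5 : Vt (n+1) * Vt (n+2) ≤ Vt (n+2) ^ (2:ℕ) := by nlinarith
      exact div_le_div_of_nonneg_left (by linarith) h4 h5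
    calc ν (n+2) / Vt (n+2) ^ (1 - p * σ) * gker18 ρ α γ (cm * Vt (n+2)) ^ p
        = ν (n+2) * Vt (n+2) ^ (p * σ - 1) * gker18 ρ α γ (cm * Vt (n+2)) ^ p := by rw [hW]
    _ ≤ ν (n+2) * Vt (n+2) ^ (p * σ - 1) * (C1 ^ p * Vt (n+2) ^ (-((N:ℝ) * γ) * p)) := by
        apply mul_le_mul_of_nonneg_left hgp
        positivity
    _ = C1 ^ p * ν (n+2) * (Vt (n+2) ^ (p * σ - 1) * Vt (n+2) ^ (-((N:ℝ) * γ) * p)) := by ring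
    _ = C1 ^ p * ν (n+2) * (Vt (n+2) ^ (E + 2) * Vt (n+2) ^ (-2:ℝ)) := by
        rw [hcomb, hsplit]
    _ ≤ C1 ^ p * (2 * (Vt (n+2) - Vt (n+1))) * (v0 ^ (E + 2) * Vt (n+2) ^ (-2:ℝ)) := by
        have hC1p : (0:ℝ) ≤ C1 ^ p := (Real.rpow_pos_of_pos hC1 p).le
        have hx : (0:ℝ) ≤ Vt (n+2) ^ (-2:ℝ) := (Real.rpow_pos_of_pos hV2 _).le
        have hy : (0:ℝ) ≤ Vt (n+2) ^ (E+2) := (Real.rpow_pos_of_pos hV2 _).le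
        exact mul_le_mul (mul_le_mul_of_nonneg_left hνb hC1p)
          (mul_le_mul_of_nonneg_right hbase hx) (mul_nonneg hy hx)
          (mul_nonneg hC1p (by linarith))
    _ = C2 * ((Vt (n+2) - Vt (n+1)) * Vt (n+2) ^ (-2:ℝ)) := by rw [hC2def]; ring
    _ ≤ C2 * (T n - T (n+1)) := by
        apply mul_le_mul_of_nonneg_left _ hC2
        rw [hinvsq]
        exact hkey
  -- conclude
  rw [← summable_nat_add_iff 1]
  apply Summable.of_nonneg_of_le _ hterm (hTele.mul_left C2)
  intro n
  have hV2 : 0 < Vt (n+2) := hVpos (n+2) (by omega)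
  have hg : 0 < gker18 ρ α γ (cm * Vt (n+2)) := gker18_pos hρ hα hγ (mul_pos hcm hV2)
  have h1 : 0 < Vt (n+2) ^ (1 - p*σ) := Real.rpow_pos_of_pos hV2 _
  have h2 := hν1 (n+2) (by omega)
  have h3 : 0 < gker18 ρ α γ (cm * Vt (n+2)) ^ p := Real.rpow_pos_of_pos hg _
  exact le_of_lt (mul_pos (div_pos h2 h1) h3)

/-- Theorem 1 (equivalence of (3.1) and (3.2)): the two-variable inequality
Σₙ∫ K(x,n) aₙ f(x) dx < k(σ)‖f‖_{p,Φ_δ}‖a‖_{q,Ψ̃} holds for all admissible f, a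
iff the one-variable inequality (Σₙ (νₙ/Ṽₙ^{1−pσ})(∫ K(x,n) f(x) dx)^p)^{1/p}
< k(σ)‖f‖_{p,Φ_δ} holds for all admissible f. -/
theorem stmt18 (μ : ℝ → ℝ) (ν Vt : ℕ → ℝ) (p q σ γ α ρ δ k : ℝ)
    (hp : 1 < p) (hpq : 1 / p + 1 / q = 1)
    (hμc : ContinuousOn μ (Set.Ioi 0)) (hμpos : ∀ x : ℝ, 0 < x → 0 < μ x)
    (hμint : ∀ x : ℝ, 0 < x → MeasureTheory.IntegrableOn μ (Set.Ioc 0 x))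
    (hν : ∀ n : ℕ, 1 ≤ n → 0 < ν n)
    (hVt : ∀ n : ℕ, 1 ≤ n →
      (∑ j ∈ Finset.Icc 1 n, ν j) - ν n / 2 ≤ Vt n ∧ Vt n ≤ ∑ j ∈ Finset.Icc 1 n, ν j)
    (hα : 0 ≤ α) (hαρ : α ≤ ρ) (hρ : 0 < ρ)
    (hγ : 0 < γ) (hγσ : γ < σ) (hσ : σ ≤ 1) (hδ : δ = 1 ∨ δ = -1)
    (hk : k = 2 * Real.Gamma (σ / γ) / (γ * (2 * ρ) ^ (σ / γ))
      * ∑' j : ℕ, 1 / ((j : ℝ) + (α + ρ) / (2 * ρ)) ^ (σ / γ)) :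
    ((∀ f : ℝ → ℝ, ∀ a : ℕ → ℝ, (∀ x, 0 ≤ f x) → (∀ n, 0 ≤ a n) →
        MeasureTheory.IntegrableOn (fun x => Phi18 μ p σ δ x * f x ^ p) (Set.Ioi (0:ℝ)) →
        0 < (∫ x in Set.Ioi (0:ℝ), Phi18 μ p σ δ x * f x ^ p) →
        Summable (fun n : ℕ => Psi18 ν Vt q σ (n + 1) * a (n + 1) ^ q) →
        0 < (∑' n : ℕ, Psi18 ν Vt q σ (n + 1) * a (n + 1) ^ q) →
        (∑' n : ℕ, ∫ x in Set.Ioi (0:ℝ), Ker18 μ Vt ρ α γ δ x (n + 1) * a (n + 1) * f x)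
          < k * (∫ x in Set.Ioi (0:ℝ), Phi18 μ p σ δ x * f x ^ p) ^ (1 / p)
              * (∑' n : ℕ, Psi18 ν Vt q σ (n + 1) * a (n + 1) ^ q) ^ (1 / q))
      ↔
      (∀ f : ℝ → ℝ, (∀ x, 0 ≤ f x) →
        MeasureTheory.IntegrableOn (fun x => Phi18 μ p σ δ x * f x ^ p) (Set.Ioi (0:ℝ)) →
        0 < (∫ x in Set.Ioi (0:ℝ), Phi18 μ p σ δ x * f x ^ p) →
        (∑' n : ℕ, ν (n + 1) / Vt (n + 1) ^ (1 - p * σ)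
            * (∫ x in Set.Ioi (0:ℝ), Ker18 μ Vt ρ α γ δ x (n + 1) * f x) ^ p) ^ (1 / p)
          < k * (∫ x in Set.Ioi (0:ℝ), Phi18 μ p σ δ x * f x ^ p) ^ (1 / p))) := by
  classical
  -- ## basic exponent facts
  have hp0 : (0:ℝ) < p := by linarith
  have h1p : 0 < 1/p := by positivity
  have h1p1 : 1/p < 1 := by rw [div_lt_one hp0]; exact hp
  have h1q : 0 < 1/q := by linarith
  have hq0 : (0:ℝ) < q := by
    by_contra h
    push_neg at h
    have : 1/q ≤ 0 := div_nonpos_of_nonneg_of_nonpos (by norm_num) h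
    linarith
  have hq1 : 1 < q := by
    have : 1/q < 1 := by linarith
    rwa [div_lt_one hq0] at this
  have hcj : p.HolderConjugate q := Real.holderConjugate_iff.mpr ⟨hp, by rw [← one_div, ← one_div]; exact hpq⟩
  have hpne : p ≠ 0 := ne_of_gt hp0
  have hqne : q ≠ 0 := ne_of_gt hq0
  have hpq2 : p * q = p + q := by
    have h := hpq
    field_simp at h
    linarith
  have hpq' : (p - 1) * q = p := by linear_combination hpq2
  have hσ0 : 0 < σ := lt_trans hγ hγσ
  -- ## U facts
  have hUnn : ∀ x : ℝ, 0 ≤ Ufun18 μ x := by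
    intro x
    exact setIntegral_nonneg measurableSet_Ioc (fun t ht => (hμpos t ht.1).le)
  have hUpos : ∀ x : ℝ, 0 < x → 0 < Ufun18 μ x := by
    intro x hx
    rw [Ufun18, setIntegral_pos_iff_support_of_nonneg_ae]
    · have hsub : Set.Ioc 0 x ⊆ Function.support μ ∩ Set.Ioc 0 x := by
        intro t ht
        exact ⟨ne_of_gt (hμpos t ht.1), ht⟩
      calc (0:ENNReal) < volume (Set.Ioc (0:ℝ) x) := by
            rw [Real.volume_Ioc]
            simp [ENNReal.ofReal_pos, hx]
      _ ≤ volume (Function.support μ ∩ Set.Ioc 0 x) := measure_mono hsub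
    · filter_upwards [ae_restrict_mem measurableSet_Ioc] with t ht using (hμpos t ht.1).le
    · exact hμint x hx
  have hUmono : Monotone (Ufun18 μ) := by
    intro x y hxy
    rcases le_or_gt y 0 with hy | hy
    · have hx : ¬ (0 < x) := by linarith
      have hy' : ¬ (0 < y) := by linarith
      rw [Ufun18, Ufun18, Set.Ioc_eq_empty hx, Set.Ioc_eq_empty hy']
    · rcases le_or_gt x 0 with hx | hx
      · have hx' : ¬ (0 < x) := by linarith
        rw [Ufun18, Set.Ioc_eq_empty hx']
        simp only [MeasureTheory.setIntegral_empty]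
        exact hUnn y
      · apply setIntegral_mono_set (hμint y hy)
        · filter_upwards [ae_restrict_mem measurableSet_Ioc] with t ht using (hμpos t ht.1).le
        · exact HasSubset.Subset.eventuallyLE (Set.Ioc_subset_Ioc_right hxy)
  have hUmeas : Measurable (Ufun18 μ) := hUmono.measurable
  -- ## Vt facts
  have hVt_half : ∀ n : ℕ, 1 ≤ n → ν n / 2 ≤ Vt n := by
    intro n hn
    have h := (hVt n hn).1
    have hs : ν n ≤ ∑ j ∈ Finset.Icc 1 n, ν j :=
      Finset.single_le_sum (fun i hi => (hν i (Finset.mem_Icc.mp hi).1).le)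
        (Finset.mem_Icc.mpr ⟨hn, le_refl n⟩)
    linarith
  have hVtpos : ∀ n : ℕ, 1 ≤ n → 0 < Vt n := by
    intro n hn
    have := hVt_half n hn
    have := hν n hn
    linarith
  have hVtstep : ∀ n : ℕ, 1 ≤ n → Vt n + ν (n+1) / 2 ≤ Vt (n+1) := by
    intro n hn
    have h1 := (hVt (n+1) (by omega)).1
    have h2 := (hVt n hn).2
    have hsum : ∑ j ∈ Finset.Icc 1 (n+1), ν j = (∑ j ∈ Finset.Icc 1 n, ν j) + ν (n+1) :=
      Finset.sum_Icc_succ_top (by omega) ν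
    linarith
  -- ## k positivity
  have he1 : 1 < σ/γ := (one_lt_div hγ).2 hγσ
  have hcpos : 0 < (α+ρ)/(2*ρ) := by positivity
  have hchalf : (1:ℝ)/2 ≤ (α+ρ)/(2*ρ) := by
    rw [div_le_div_iff₀ (by norm_num) (by positivity)]
    linarith
  have hsumk : Summable (fun j : ℕ => 1 / ((j:ℝ) + (α+ρ)/(2*ρ)) ^ (σ/γ)) := by
    have hbase : Summable (fun j : ℕ => 1/((j:ℝ)+1) ^ (σ/γ)) := by
      have h := (summable_nat_add_iff 1).2 (Real.summable_one_div_nat_rpow.2 he1)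
      apply h.congr
      intro j
      push_cast
      ring_nf
    have hjc : ∀ j : ℕ, (0:ℝ) < (j:ℝ) + (α+ρ)/(2*ρ) := by
      intro j
      have := Nat.cast_nonneg (α := ℝ) j
      linarith
    refine Summable.of_nonneg_of_le
      (fun j => div_nonneg (by norm_num) (Real.rpow_nonneg (hjc j).le _))
      (fun j => ?_) (hbase.mul_left ((2:ℝ) ^ (σ/γ)))
    · 
      have hj0 : (0:ℝ) ≤ (j:ℝ) := Nat.cast_nonneg j
      have hj2 : ((j:ℝ)+1)/2 ≤ (j:ℝ) + (α+ρ)/(2*ρ) := by linarith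
      have hpos1 : (0:ℝ) < ((j:ℝ)+1)/2 := by positivity
      have h3 : (((j:ℝ)+1)/2) ^ (σ/γ) ≤ ((j:ℝ) + (α+ρ)/(2*ρ)) ^ (σ/γ) :=
        Real.rpow_le_rpow hpos1.le hj2 (by positivity)
      have h4 : 1 / ((j:ℝ) + (α+ρ)/(2*ρ)) ^ (σ/γ) ≤ 1 / (((j:ℝ)+1)/2) ^ (σ/γ) :=
        one_div_le_one_div_of_le (Real.rpow_pos_of_pos hpos1 _) h3
      calc 1 / ((j:ℝ) + (α+ρ)/(2*ρ)) ^ (σ/γ) ≤ 1 / (((j:ℝ)+1)/2) ^ (σ/γ) := h4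
      _ = (2:ℝ) ^ (σ/γ) * (1/((j:ℝ)+1) ^ (σ/γ)) := by
          rw [Real.div_rpow (by positivity) (by norm_num)]
          rw [one_div_div]
          ring
  have hkpos : 0 < k := by
    rw [hk]
    apply mul_pos
    · apply div_pos
      · have := Real.Gamma_pos_of_pos (show (0:ℝ) < σ/γ by positivity)
        linarith
      · have : (0:ℝ) < (2*ρ) ^ (σ/γ) := Real.rpow_pos_of_pos (by linarith) _
        positivity
    · have hjc : ∀ j : ℕ, (0:ℝ) < (j:ℝ) + (α+ρ)/(2*ρ) := by
        intro j
        have := Nat.cast_nonneg (α := ℝ) j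
        linarith
      apply Summable.tsum_pos hsumk
        (fun j => div_nonneg (by norm_num) (Real.rpow_nonneg (hjc j).le _)) 0
      exact div_pos one_pos (Real.rpow_pos_of_pos (hjc 0) _)
  -- ## kernel facts
  have hKer_pos : ∀ n : ℕ, 1 ≤ n → ∀ x : ℝ, 0 < x → 0 < Ker18 μ Vt ρ α γ δ x n := by
    intro n hn x hx
    rw [Ker18_eq_gker18]
    exact gker18_pos hρ hα hγ
      (mul_pos (Real.rpow_pos_of_pos (hUpos x hx) δ) (hVtpos n hn))
  have hKer_meas : ∀ n : ℕ, Measurable (fun x => Ker18 μ Vt ρ α γ δ x n) := by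
    intro n
    simp only [Ker18]
    fun_prop
  have hPhi_pos : ∀ x : ℝ, 0 < x → 0 < Phi18 μ p σ δ x := by
    intro x hx
    exact div_pos (Real.rpow_pos_of_pos (hUpos x hx) _)
      (Real.rpow_pos_of_pos (hμpos x hx) _)
  constructor
  · -- (I) → (II)
    intro h1 f hf hfi hI
    set c : ℕ → ℝ := fun n => ∫ x in Set.Ioi (0:ℝ), Ker18 μ Vt ρ α γ δ x n * f x with hcdef
    set W : ℕ → ℝ := fun n => ν n / Vt n ^ (1 - p*σ) with hWdef
    set I : ℝ := ∫ x in Set.Ioi (0:ℝ), Phi18 μ p σ δ x * f x ^ p with hIdef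
    have hWpos : ∀ n : ℕ, 1 ≤ n → 0 < W n := by
      intro n hn
      exact div_pos (hν n hn) (Real.rpow_pos_of_pos (hVtpos n hn) _)
    have hcnn : ∀ n : ℕ, 1 ≤ n → 0 ≤ c n := by
      intro n hn
      apply setIntegral_nonneg measurableSet_Ioi
      intro x hx
      exact mul_nonneg (hKer_pos n hn x hx).le (hf x)
    show (∑' n : ℕ, W (n+1) * c (n+1) ^ p) ^ (1/p) < k * I ^ (1/p)
    have hkI : 0 < k * I ^ (1/p) := mul_pos hkpos (Real.rpow_pos_of_pos hI _)
    by_cases hs : Summable (fun n : ℕ => W (n+1) * c (n+1) ^ p)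
    · set J : ℝ := ∑' n : ℕ, W (n+1) * c (n+1) ^ p with hJdef
      have hJnn : 0 ≤ J :=
        tsum_nonneg (fun n => mul_nonneg (hWpos (n+1) (by omega)).le
          (Real.rpow_nonneg (hcnn (n+1) (by omega)) p))
      rcases eq_or_lt_of_le hJnn with hJ0 | hJpos
      · rw [← hJ0, Real.zero_rpow (ne_of_gt h1p)]
        exact hkI
      · set a : ℕ → ℝ := fun n => if n = 0 then 0 else W n * c n ^ (p - 1) with hadef
        have ha : ∀ n, 0 ≤ a n := by
          intro n
          rw [hadef]
          dsimp only
          split_ifs with h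
          · exact le_rfl
          · exact mul_nonneg (hWpos n (Nat.one_le_iff_ne_zero.2 h)).le
              (Real.rpow_nonneg (hcnn n (Nat.one_le_iff_ne_zero.2 h)) _)
        have hkey : ∀ n : ℕ, Psi18 ν Vt q σ (n+1) * a (n+1) ^ q = W (n+1) * c (n+1) ^ p := by
          intro n
          have hn1 : 1 ≤ n + 1 := by omega
          have hV := hVtpos (n+1) hn1
          have hνp := hν (n+1) hn1
          have hc := hcnn (n+1) hn1
          have hW := hWpos (n+1) hn1
          have han : a (n+1) = W (n+1) * c (n+1) ^ (p-1) := by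
            simp only [hadef]
            rw [if_neg (show ¬(n+1 = 0) by omega)]
          have hPsiW : Psi18 ν Vt q σ (n+1) * W (n+1) ^ q = W (n+1) := by
            have hA : q*(1-σ)-1 = (1-p*σ)*q + (-(1-p*σ)) := by linear_combination σ * hpq2
            have hsplitV : Vt (n+1) ^ (q*(1-σ)-1)
                = Vt (n+1) ^ ((1-p*σ)*q) * Vt (n+1) ^ (-(1-p*σ)) := by
              rw [hA, Real.rpow_add hV]
            have hsplitν : ν (n+1) ^ q = ν (n+1) ^ (q-1) * ν (n+1) := by
              nth_rewrite 1 [show q = (q-1) + 1 by ring]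
              rw [Real.rpow_add hνp, Real.rpow_one]
            have hne1 : ν (n+1) ^ (q-1) ≠ 0 := (Real.rpow_pos_of_pos hνp _).ne'
            have hne2 : Vt (n+1) ^ ((1-p*σ)*q) ≠ 0 := (Real.rpow_pos_of_pos hV _).ne'
            have hne3 : Vt (n+1) ^ (1-p*σ) ≠ 0 := (Real.rpow_pos_of_pos hV _).ne'
            simp only [Psi18, hWdef]
            rw [Real.div_rpow hνp.le (Real.rpow_nonneg hV.le _), ← Real.rpow_mul hV.le]
            rw [hsplitV, hsplitν, Real.rpow_neg hV.le]
            field_simp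
          rw [han, Real.mul_rpow hW.le (Real.rpow_nonneg hc _), ← Real.rpow_mul hc, hpq',
            ← mul_assoc, hPsiW]
        have hsa' : Summable (fun n : ℕ => Psi18 ν Vt q σ (n+1) * a (n+1) ^ q) :=
          hs.congr (fun n => (hkey n).symm)
        have htsum_eq : ∑' n : ℕ, Psi18 ν Vt q σ (n+1) * a (n+1) ^ q = J := tsum_congr hkey
        have h := h1 f a hf ha hfi hI hsa' (by rw [htsum_eq]; exact hJpos)
        rw [htsum_eq] at h
        have hLHS : ∀ n : ℕ,
            (∫ x in Set.Ioi (0:ℝ), Ker18 μ Vt ρ α γ δ x (n+1) * a (n+1) * f x)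
              = W (n+1) * c (n+1) ^ p := by
          intro n
          have hre : (fun x => Ker18 μ Vt ρ α γ δ x (n+1) * a (n+1) * f x)
              = fun x => a (n+1) * (Ker18 μ Vt ρ α γ δ x (n+1) * f x) := by
            funext x; ring
          rw [hre, MeasureTheory.integral_const_mul]
          have han : a (n+1) = W (n+1) * c (n+1) ^ (p-1) := by
            simp only [hadef]
            rw [if_neg (show ¬(n+1 = 0) by omega)]
          rw [han]
          have hc := hcnn (n+1) (by omega)
          rcases eq_or_lt_of_le hc with h0 | hcp
          · rw [← h0, Real.zero_rpow (show p - 1 ≠ 0 from ne_of_gt (by linarith)),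
              Real.zero_rpow hpne]
            ring
          · have hcc : c (n+1) ^ (p-1) * c (n+1) = c (n+1) ^ p := by
              nth_rewrite 2 [← Real.rpow_one (c (n+1))]
              rw [← Real.rpow_add hcp]
              ring_nf
            rw [mul_assoc, hcc]
        have hL : (∑' n : ℕ, ∫ x in Set.Ioi (0:ℝ),
            Ker18 μ Vt ρ α γ δ x (n+1) * a (n+1) * f x) = J := tsum_congr hLHS
        rw [hL] at h
        have hJq : 0 < J ^ (1/q) := Real.rpow_pos_of_pos hJpos _
        have hJsplit : J = J ^ (1/p) * J ^ (1/q) := by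
          rw [← Real.rpow_add hJpos, hpq, Real.rpow_one]
        conv at h => lhs; rw [hJsplit]
        exact (mul_lt_mul_iff_left₀ hJq).mp h
    · rw [tsum_eq_zero_of_not_summable hs, Real.zero_rpow (ne_of_gt h1p)]
      exact hkI
  · -- (II) → (I)
    intro h2 f a hf ha hfi hI hsa hpa
    set c : ℕ → ℝ := fun n => ∫ x in Set.Ioi (0:ℝ), Ker18 μ Vt ρ α γ δ x n * f x with hcdef
    set W : ℕ → ℝ := fun n => ν n / Vt n ^ (1 - p*σ) with hWdef
    set I : ℝ := ∫ x in Set.Ioi (0:ℝ), Phi18 μ p σ δ x * f x ^ p with hIdef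
    set A : ℝ := ∑' n : ℕ, Psi18 ν Vt q σ (n + 1) * a (n + 1) ^ q with hAdef
    have hWpos : ∀ n : ℕ, 1 ≤ n → 0 < W n := by
      intro n hn
      exact div_pos (hν n hn) (Real.rpow_pos_of_pos (hVtpos n hn) _)
    have hcnn : ∀ n : ℕ, 1 ≤ n → 0 ≤ c n := by
      intro n hn
      apply setIntegral_nonneg measurableSet_Ioi
      intro x hx
      exact mul_nonneg (hKer_pos n hn x hx).le (hf x)
    have hinv_mono : ∀ {u v : ℝ}, 0 < u → u ≤ v → v⁻¹ ≤ u⁻¹ := by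
      intro u v hu huv
      have := one_div_le_one_div_of_le hu huv
      simpa [one_div] using this
    -- measurability of f
    have hPhi_meas : AEMeasurable (Phi18 μ p σ δ) (volume.restrict (Set.Ioi 0)) := by
      have hμm : AEMeasurable μ (volume.restrict (Set.Ioi 0)) :=
        hμc.aemeasurable measurableSet_Ioi
      rw [show Phi18 μ p σ δ
        = fun x => (Ufun18 μ x) ^ (p * (1 - δ * σ) - 1) / μ x ^ (p - 1) from rfl]
      fun_prop
    have hfp_meas : AEMeasurable (fun x => f x ^ p) (volume.restrict (Set.Ioi 0)) := by
      have h1 : AEMeasurable (fun x => Phi18 μ p σ δ x * f x ^ p)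
          (volume.restrict (Set.Ioi 0)) := hfi.aemeasurable
      have h2 : AEMeasurable
          (fun x => (Phi18 μ p σ δ x)⁻¹ * (Phi18 μ p σ δ x * f x ^ p))
          (volume.restrict (Set.Ioi 0)) := hPhi_meas.inv.mul h1
      apply h2.congr
      filter_upwards [ae_restrict_mem measurableSet_Ioi] with x hx
      rw [← mul_assoc, inv_mul_cancel₀ (hPhi_pos x hx).ne', one_mul]
    have hfmeas : AEMeasurable f (volume.restrict (Set.Ioi 0)) := by
      have h1 : AEMeasurable (fun x => (f x ^ p) ^ p⁻¹) (volume.restrict (Set.Ioi 0)) := by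
        fun_prop
      apply h1.congr
      filter_upwards [] with x
      rw [Real.rpow_rpow_inv (hf x) hpne]
    -- truncations
    set fm : ℕ → ℝ → ℝ :=
      fun m x => if x ∈ Set.Icc ((m:ℝ)⁻¹) (m:ℝ) then min (f x) m else 0 with hfmdef
    have hfm_nonneg : ∀ m x, 0 ≤ fm m x := by
      intro m x
      simp only [hfmdef]
      split_ifs
      · exact le_min (hf x) (Nat.cast_nonneg m)
      · exact le_rfl
    have hfm_le : ∀ m x, fm m x ≤ f x := by
      intro m x
      simp only [hfmdef]
      split_ifs
      · exact min_le_left _ _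
      · exact hf x
    have hfm_meas : ∀ m : ℕ, AEMeasurable (fm m) (volume.restrict (Set.Ioi 0)) := by
      intro m
      have heq : fm m = Set.indicator (Set.Icc ((m:ℝ)⁻¹) (m:ℝ)) (fun x => min (f x) (m:ℝ)) := by
        funext x
        rw [Set.indicator_apply]
      rw [heq]
      exact (hfmeas.min aemeasurable_const).indicator measurableSet_Icc
    have hfm_int : ∀ m : ℕ,
        IntegrableOn (fun x => Phi18 μ p σ δ x * fm m x ^ p) (Set.Ioi 0) := by
      intro m
      have hfmp : AEMeasurable (fun x => fm m x ^ p) (volume.restrict (Set.Ioi 0)) := by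
        have hh := hfm_meas m
        fun_prop
      apply Integrable.mono' hfi
      · exact (hPhi_meas.mul hfmp).aestronglyMeasurable
      · filter_upwards [ae_restrict_mem measurableSet_Ioi] with x hx
        have h1 : 0 ≤ Phi18 μ p σ δ x := (hPhi_pos x hx).le
        have h2 : fm m x ^ p ≤ f x ^ p :=
          Real.rpow_le_rpow (hfm_nonneg m x) (hfm_le m x) hp0.le
        rw [Real.norm_eq_abs,
          abs_of_nonneg (mul_nonneg h1 (Real.rpow_nonneg (hfm_nonneg m x) p))]
        exact mul_le_mul_of_nonneg_left h2 h1
    have hfm_tend_x : ∀ x : ℝ, 0 < x → ∀ᶠ m : ℕ in atTop, fm m x = f x := by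
      intro x hx
      obtain ⟨M, hM⟩ := exists_nat_ge (max (max x x⁻¹) (f x))
      filter_upwards [eventually_ge_atTop M] with m hm
      have hmM : (M:ℝ) ≤ (m:ℝ) := Nat.cast_le.2 hm
      have hx1 : x ≤ (m:ℝ) := le_trans (le_trans (le_max_left x x⁻¹) (le_max_left _ _)) (hM.trans hmM)
      have hxinv : x⁻¹ ≤ (m:ℝ) :=
        le_trans (le_trans (le_max_right x x⁻¹) (le_max_left _ _)) (hM.trans hmM)
      have hfx : f x ≤ (m:ℝ) := le_trans (le_max_right _ _) (hM.trans hmM)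
      have hinv : (m:ℝ)⁻¹ ≤ x := by
        have hxinv0 : 0 < x⁻¹ := by positivity
        have := hinv_mono hxinv0 hxinv
        rwa [inv_inv] at this
      simp only [hfmdef]
      rw [if_pos (Set.mem_Icc.2 ⟨hinv, hx1⟩)]
      exact min_eq_left hfx
    have hIm_tend : Tendsto (fun m : ℕ => ∫ x in Set.Ioi (0:ℝ),
        Phi18 μ p σ δ x * fm m x ^ p) atTop (𝓝 I) := by
      apply tendsto_integral_of_dominated_convergence
        (bound := fun x => Phi18 μ p σ δ x * f x ^ p)
      · intro m
        have hfmp : AEMeasurable (fun x => fm m x ^ p) (volume.restrict (Set.Ioi 0)) := by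
          have hh := hfm_meas m
          fun_prop
        exact (hPhi_meas.mul hfmp).aestronglyMeasurable
      · exact hfi
      · intro m
        filter_upwards [ae_restrict_mem measurableSet_Ioi] with x hx
        have h1 : 0 ≤ Phi18 μ p σ δ x := (hPhi_pos x hx).le
        rw [Real.norm_eq_abs,
          abs_of_nonneg (mul_nonneg h1 (Real.rpow_nonneg (hfm_nonneg m x) p))]
        exact mul_le_mul_of_nonneg_left
          (Real.rpow_le_rpow (hfm_nonneg m x) (hfm_le m x) hp0.le) h1
      · filter_upwards [ae_restrict_mem measurableSet_Ioi] with x hx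
        apply tendsto_const_nhds.congr'
        filter_upwards [hfm_tend_x x hx] with m hm
        rw [hm]
    have hIm_pos : ∀ᶠ m : ℕ in atTop,
        0 < ∫ x in Set.Ioi (0:ℝ), Phi18 μ p σ δ x * fm m x ^ p :=
      hIm_tend.eventually (eventually_gt_nhds hI)
    have hIm_le : ∀ m : ℕ,
        (∫ x in Set.Ioi (0:ℝ), Phi18 μ p σ δ x * fm m x ^ p) ≤ I := by
      intro m
      apply setIntegral_mono_on (hfm_int m) hfi measurableSet_Ioi
      intro x hx
      exact mul_le_mul_of_nonneg_left
        (Real.rpow_le_rpow (hfm_nonneg m x) (hfm_le m x) hp0.le) (hPhi_pos x hx).le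
    have hcm_nn : ∀ m n : ℕ, 1 ≤ n →
        0 ≤ ∫ x in Set.Ioi (0:ℝ), Ker18 μ Vt ρ α γ δ x n * fm m x := by
      intro m n hn
      apply setIntegral_nonneg measurableSet_Ioi
      intro x hx
      exact mul_nonneg (hKer_pos n hn x hx).le (hfm_nonneg m x)
    -- summability for truncations
    have hJm : ∀ m : ℕ, 1 ≤ m → Summable (fun n : ℕ => W (n+1) *
        (∫ x in Set.Ioi (0:ℝ), Ker18 μ Vt ρ α γ δ x (n+1) * fm m x) ^ p) := by
      intro m hm
      have hm0 : (0:ℝ) < (m:ℝ) := by exact_mod_cast hm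
      have hminv : (0:ℝ) < ((m:ℝ))⁻¹ := by positivity
      set cm : ℝ := min ((Ufun18 μ ((m:ℝ)⁻¹)) ^ δ) ((Ufun18 μ (m:ℝ)) ^ δ) with hcmdef
      have hcm : 0 < cm := lt_min (Real.rpow_pos_of_pos (hUpos _ hminv) _)
        (Real.rpow_pos_of_pos (hUpos _ hm0) _)
      have hKb : ∀ n : ℕ, 1 ≤ n → ∀ x ∈ Set.Icc ((m:ℝ)⁻¹) (m:ℝ),
          Ker18 μ Vt ρ α γ δ x n ≤ gker18 ρ α γ (cm * Vt n) := by
        intro n hn x hx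
        have hx0 : 0 < x := lt_of_lt_of_le hminv hx.1
        have hcmle : cm ≤ (Ufun18 μ x) ^ δ := by
          rcases hδ with h1 | h1
          · calc cm ≤ (Ufun18 μ ((m:ℝ)⁻¹)) ^ δ := min_le_left _ _
            _ ≤ (Ufun18 μ x) ^ δ := by
                rw [h1, Real.rpow_one, Real.rpow_one]
                exact hUmono hx.1
          · calc cm ≤ (Ufun18 μ (m:ℝ)) ^ δ := min_le_right _ _
            _ ≤ (Ufun18 μ x) ^ δ := by
                rw [h1, Real.rpow_neg_one, Real.rpow_neg_one]
                exact hinv_mono (hUpos x hx0) (hUmono hx.2)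
        rw [Ker18_eq_gker18]
        apply gker18_anti hρ hα hγ (mul_pos hcm (hVtpos n hn))
        exact mul_le_mul_of_nonneg_right hcmle (hVtpos n hn).le
      have hcb : ∀ n : ℕ, 1 ≤ n →
          (∫ x in Set.Ioi (0:ℝ), Ker18 μ Vt ρ α γ δ x n * fm m x)
            ≤ (m:ℝ)^2 * gker18 ρ α γ (cm * Vt n) := by
        intro n hn
        have hgpos : 0 < gker18 ρ α γ (cm * Vt n) :=
          gker18_pos hρ hα hγ (mul_pos hcm (hVtpos n hn))
        set B : ℝ → ℝ := Set.indicator (Set.Icc ((m:ℝ)⁻¹) (m:ℝ))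
          (fun _ => (m:ℝ) * gker18 ρ α γ (cm * Vt n)) with hBdef
        have hBint : Integrable B := by
          apply IntegrableOn.integrable_indicator _ measurableSet_Icc
          exact integrableOn_const measure_Icc_lt_top.ne
        have hBnn : ∀ x, 0 ≤ B x := by
          intro x
          rw [hBdef]
          exact Set.indicator_nonneg (fun y _ => mul_nonneg hm0.le hgpos.le) x
        have hle : ∀ x ∈ Set.Ioi (0:ℝ), Ker18 μ Vt ρ α γ δ x n * fm m x ≤ B x := by
          intro x hx
          by_cases hxI : x ∈ Set.Icc ((m:ℝ)⁻¹) (m:ℝ)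
          · rw [hBdef, Set.indicator_of_mem hxI]
            have h2 : fm m x ≤ (m:ℝ) := by
              simp only [hfmdef]
              split_ifs
              all_goals first
                | exact min_le_right _ _
                | exact hm0.le
            calc Ker18 μ Vt ρ α γ δ x n * fm m x
                ≤ gker18 ρ α γ (cm * Vt n) * (m:ℝ) :=
                  mul_le_mul (hKb n hn x hxI) h2 (hfm_nonneg m x) hgpos.le
            _ = (m:ℝ) * gker18 ρ α γ (cm * Vt n) := mul_comm _ _
          · rw [hBdef, Set.indicator_of_notMem hxI]
            have hz : fm m x = 0 := by
              simp only [hfmdef]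
              rw [if_neg hxI]
            rw [hz, mul_zero]
        have hBval : (∫ x in Set.Ioi (0:ℝ), B x) ≤ (m:ℝ)^2 * gker18 ρ α γ (cm * Vt n) := by
          have h1 : (∫ x in Set.Ioi (0:ℝ), B x) ≤ ∫ x, B x :=
            setIntegral_le_integral hBint (Filter.Eventually.of_forall hBnn)
          have h2 : (∫ x, B x) = (volume (Set.Icc ((m:ℝ)⁻¹) (m:ℝ))).toReal
              * ((m:ℝ) * gker18 ρ α γ (cm * Vt n)) := by
            rw [hBdef, integral_indicator measurableSet_Icc, setIntegral_const, smul_eq_mul, measureReal_def]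
          have hinvle : (m:ℝ)⁻¹ ≤ (m:ℝ) := by
            have h4 : (1:ℝ) ≤ (m:ℝ) := by exact_mod_cast hm
            have h5 : (m:ℝ)⁻¹ ≤ 1 := by
              have := hinv_mono one_pos h4
              simpa using this
            linarith
          have h3 : (volume (Set.Icc ((m:ℝ)⁻¹) (m:ℝ))).toReal ≤ (m:ℝ) := by
            rw [Real.volume_Icc, ENNReal.toReal_ofReal (by linarith)]
            linarith [hminv]
          calc (∫ x in Set.Ioi (0:ℝ), B x) ≤ ∫ x, B x := h1
          _ = (volume (Set.Icc ((m:ℝ)⁻¹) (m:ℝ))).toReal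
              * ((m:ℝ) * gker18 ρ α γ (cm * Vt n)) := h2
          _ ≤ (m:ℝ) * ((m:ℝ) * gker18 ρ α γ (cm * Vt n)) :=
              mul_le_mul_of_nonneg_right h3 (by positivity)
          _ = (m:ℝ)^2 * gker18 ρ α γ (cm * Vt n) := by ring
        by_cases hint : Integrable (fun x => Ker18 μ Vt ρ α γ δ x n * fm m x)
            (volume.restrict (Set.Ioi 0))
        · calc (∫ x in Set.Ioi (0:ℝ), Ker18 μ Vt ρ α γ δ x n * fm m x)
              ≤ ∫ x in Set.Ioi (0:ℝ), B x := by
                apply integral_mono_ae hint hBint.restrict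
                filter_upwards [ae_restrict_mem measurableSet_Ioi] with x hx
                exact hle x hx
          _ ≤ (m:ℝ)^2 * gker18 ρ α γ (cm * Vt n) := hBval
        · rw [integral_undef hint]
          exact mul_nonneg (by positivity) hgpos.le
      have hbase := sum18 ν Vt p σ γ α ρ cm hp hσ hσ0 hρ hα hγ hcm hν hVtpos hVtstep
      apply Summable.of_nonneg_of_le
        (fun n => mul_nonneg (hWpos (n+1) (by omega)).le
          (Real.rpow_nonneg (hcm_nn m (n+1) (by omega)) p))
        (fun n => ?hcomp) (hbase.mul_left (((m:ℝ)^2) ^ p))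
      case hcomp =>
        have hgpos : 0 < gker18 ρ α γ (cm * Vt (n+1)) :=
          gker18_pos hρ hα hγ (mul_pos hcm (hVtpos (n+1) (by omega)))
        calc W (n+1) * (∫ x in Set.Ioi (0:ℝ), Ker18 μ Vt ρ α γ δ x (n+1) * fm m x) ^ p
            ≤ W (n+1) * ((m:ℝ)^2 * gker18 ρ α γ (cm * Vt (n+1))) ^ p := by
              apply mul_le_mul_of_nonneg_left _ (hWpos (n+1) (by omega)).le
              exact Real.rpow_le_rpow (hcm_nn m (n+1) (by omega)) (hcb (n+1) (by omega)) hp0.le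
        _ = ((m:ℝ)^2) ^ p * (ν (n+1) / Vt (n+1) ^ (1 - p * σ)
              * gker18 ρ α γ (cm * Vt (n+1)) ^ p) := by
            rw [Real.mul_rpow (by positivity) hgpos.le, hWdef]
            ring
    -- eventual bound for truncated sums
    have hJm_le : ∀ᶠ m : ℕ in atTop, (∑' n : ℕ, W (n+1) *
        (∫ x in Set.Ioi (0:ℝ), Ker18 μ Vt ρ α γ δ x (n+1) * fm m x) ^ p) ≤ k ^ p * I := by
      filter_upwards [eventually_ge_atTop 1, hIm_pos] with m hm hImp
      have h : (∑' n : ℕ, W (n+1) *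
          (∫ x in Set.Ioi (0:ℝ), Ker18 μ Vt ρ α γ δ x (n+1) * fm m x) ^ p) ^ (1/p)
          < k * (∫ x in Set.Ioi (0:ℝ), Phi18 μ p σ δ x * fm m x ^ p) ^ (1/p) :=
        h2 (fm m) (hfm_nonneg m) (hfm_int m) hImp
      set Jm : ℝ := ∑' n : ℕ, W (n+1) *
        (∫ x in Set.Ioi (0:ℝ), Ker18 μ Vt ρ α γ δ x (n+1) * fm m x) ^ p with hJmdef
      set Im : ℝ := ∫ x in Set.Ioi (0:ℝ), Phi18 μ p σ δ x * fm m x ^ p with hImdef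
      have hJmnn : 0 ≤ Jm := tsum_nonneg (fun n => mul_nonneg (hWpos (n+1) (by omega)).le
        (Real.rpow_nonneg (hcm_nn m (n+1) (by omega)) p))
      calc Jm = (Jm ^ (1/p)) ^ p := by
            rw [one_div, Real.rpow_inv_rpow hJmnn hpne]
      _ ≤ (k * Im ^ (1/p)) ^ p :=
          Real.rpow_le_rpow (Real.rpow_nonneg hJmnn _) h.le hp0.le
      _ = k ^ p * (Im ^ (1/p)) ^ p := Real.mul_rpow hkpos.le (Real.rpow_nonneg hImp.le _)
      _ = k ^ p * Im := by rw [one_div, Real.rpow_inv_rpow hImp.le hpne]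
      _ ≤ k ^ p * I := mul_le_mul_of_nonneg_left (hIm_le m) (Real.rpow_nonneg hkpos.le p)
    -- summability of J
    have hJsum : Summable (fun n : ℕ => W (n+1) * c (n+1) ^ p) := by
      apply summable_of_sum_range_le (c := k ^ p * I)
        (fun n => mul_nonneg (hWpos (n+1) (by omega)).le
          (Real.rpow_nonneg (hcnn (n+1) (by omega)) p))
      intro N
      set S : Finset ℕ := (Finset.range N).filter
        (fun n => Integrable (fun x => Ker18 μ Vt ρ α γ δ x (n+1) * f x)
          (volume.restrict (Set.Ioi 0))) with hSdef
      have hsum_eq : ∑ n ∈ Finset.range N, W (n+1) * c (n+1) ^ p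
          = ∑ n ∈ S, W (n+1) * c (n+1) ^ p := by
        rw [hSdef]
        symm
        apply Finset.sum_filter_of_ne
        intro n _ hne
        by_contra hint
        apply hne
        have hc0 : c (n+1) = 0 := integral_undef hint
        rw [hc0, Real.zero_rpow hpne, mul_zero]
      have htend : Tendsto (fun m : ℕ => ∑ n ∈ S, W (n+1) *
          (∫ x in Set.Ioi (0:ℝ), Ker18 μ Vt ρ α γ δ x (n+1) * fm m x) ^ p) atTop
          (𝓝 (∑ n ∈ S, W (n+1) * c (n+1) ^ p)) := by
        apply tendsto_finset_sum
        intro n hnS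
        have hint : Integrable (fun x => Ker18 μ Vt ρ α γ δ x (n+1) * f x)
            (volume.restrict (Set.Ioi 0)) := (Finset.mem_filter.1 hnS).2
        have hct : Tendsto (fun m : ℕ => ∫ x in Set.Ioi (0:ℝ),
            Ker18 μ Vt ρ α γ δ x (n+1) * fm m x) atTop (𝓝 (c (n+1))) := by
          apply tendsto_integral_of_dominated_convergence
            (bound := fun x => Ker18 μ Vt ρ α γ δ x (n+1) * f x)
          · intro m
            exact ((hKer_meas (n+1)).aemeasurable.mul (hfm_meas m)).aestronglyMeasurable
          · exact hint
          · intro m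
            filter_upwards [ae_restrict_mem measurableSet_Ioi] with x hx
            rw [Real.norm_eq_abs, abs_of_nonneg
              (mul_nonneg (hKer_pos (n+1) (by omega) x hx).le (hfm_nonneg m x))]
            exact mul_le_mul_of_nonneg_left (hfm_le m x) (hKer_pos (n+1) (by omega) x hx).le
          · filter_upwards [ae_restrict_mem measurableSet_Ioi] with x hx
            apply tendsto_const_nhds.congr'
            filter_upwards [hfm_tend_x x hx] with m hm
            rw [hm]
        exact (hct.rpow_const (Or.inr hp0.le)).const_mul _
      rw [hsum_eq]
      apply le_of_tendsto htend
      filter_upwards [hJm_le, eventually_ge_atTop 1] with m hmle hm1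
      calc (∑ n ∈ S, W (n+1) *
          (∫ x in Set.Ioi (0:ℝ), Ker18 μ Vt ρ α γ δ x (n+1) * fm m x) ^ p)
          ≤ ∑' n : ℕ, W (n+1) *
            (∫ x in Set.Ioi (0:ℝ), Ker18 μ Vt ρ α γ δ x (n+1) * fm m x) ^ p :=
          Summable.sum_le_tsum S (fun n _ => mul_nonneg (hWpos (n+1) (by omega)).le
            (Real.rpow_nonneg (hcm_nn m (n+1) (by omega)) p)) (hJm m hm1)
      _ ≤ k ^ p * I := hmle
    -- apply (II) to f itself
    have hmain : (∑' n : ℕ, W (n+1) * c (n+1) ^ p) ^ (1/p) < k * I ^ (1/p) :=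
      h2 f hf hfi hI
    set J : ℝ := ∑' n : ℕ, W (n+1) * c (n+1) ^ p with hJdef
    have hJnn : 0 ≤ J := tsum_nonneg (fun n => mul_nonneg (hWpos (n+1) (by omega)).le
      (Real.rpow_nonneg (hcnn (n+1) (by omega)) p))
    -- Hölder
    have hPsipos : ∀ n : ℕ, 1 ≤ n → 0 < Psi18 ν Vt q σ n := by
      intro n hn
      exact div_pos (Real.rpow_pos_of_pos (hVtpos n hn) _)
        (Real.rpow_pos_of_pos (hν n hn) _)
    set F : ℕ → ℝ := fun n => W (n+1) ^ (1/p) * c (n+1) with hFdef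
    set G : ℕ → ℝ := fun n => Psi18 ν Vt q σ (n+1) ^ (1/q) * a (n+1) with hGdef
    have hFnn : ∀ n, 0 ≤ F n := fun n => mul_nonneg
      (Real.rpow_nonneg (hWpos (n+1) (by omega)).le _) (hcnn (n+1) (by omega))
    have hGnn : ∀ n, 0 ≤ G n := fun n => mul_nonneg
      (Real.rpow_nonneg (hPsipos (n+1) (by omega)).le _) (ha (n+1))
    have hFp : ∀ n, F n ^ p = W (n+1) * c (n+1) ^ p := by
      intro n
      rw [hFdef]
      dsimp only
      rw [Real.mul_rpow (Real.rpow_nonneg (hWpos (n+1) (by omega)).le _)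
        (hcnn (n+1) (by omega)), one_div,
        Real.rpow_inv_rpow (hWpos (n+1) (by omega)).le hpne]
    have hGq : ∀ n, G n ^ q = Psi18 ν Vt q σ (n+1) * a (n+1) ^ q := by
      intro n
      rw [hGdef]
      dsimp only
      rw [Real.mul_rpow (Real.rpow_nonneg (hPsipos (n+1) (by omega)).le _) (ha (n+1)),
        one_div, Real.rpow_inv_rpow (hPsipos (n+1) (by omega)).le hqne]
    have hFG : ∀ n : ℕ, a (n+1) * c (n+1) = F n * G n := by
      intro n
      have hV := hVtpos (n+1) (by omega)
      have hνp := hν (n+1) (by omega)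
      have hBq : (q-1)*(1/q) = 1/p := by
        field_simp
        linear_combination hpq2
      have hAq : (q*(1-σ)-1)*(1/q) = (1-p*σ)*(1/p) := by
        field_simp
        linear_combination hpq2
      have h1 : W (n+1) ^ (1/p) = ν (n+1) ^ (1/p) / Vt (n+1) ^ ((1-p*σ)*(1/p)) := by
        rw [hWdef]
        dsimp only
        rw [Real.div_rpow hνp.le (Real.rpow_nonneg hV.le _), ← Real.rpow_mul hV.le]
      have h2 : Psi18 ν Vt q σ (n+1) ^ (1/q)
          = Vt (n+1) ^ ((1-p*σ)*(1/p)) / ν (n+1) ^ (1/p) := by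
        simp only [Psi18]
        rw [Real.div_rpow (Real.rpow_nonneg hV.le _) (Real.rpow_nonneg hνp.le _),
          ← Real.rpow_mul hV.le, ← Real.rpow_mul hνp.le, hAq, hBq]
      have hWP : W (n+1) ^ (1/p) * Psi18 ν Vt q σ (n+1) ^ (1/q) = 1 := by
        rw [h1, h2, div_mul_div_comm]
        rw [mul_comm (ν (n+1) ^ (1/p)) (Vt (n+1) ^ ((1-p*σ)*(1/p)))]
        exact div_self (ne_of_gt (mul_pos (Real.rpow_pos_of_pos hV _)
          (Real.rpow_pos_of_pos hνp _)))
      calc a (n+1) * c (n+1)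
          = (W (n+1) ^ (1/p) * Psi18 ν Vt q σ (n+1) ^ (1/q)) * (a (n+1) * c (n+1)) := by
            rw [hWP, one_mul]
      _ = F n * G n := by
          rw [hFdef, hGdef]
          dsimp only
          ring
    obtain ⟨hFGsum, hFGle⟩ := Real.summable_and_inner_le_Lp_mul_Lq_tsum_of_nonneg hcj hFnn hGnn
      (hJsum.congr (fun n => (hFp n).symm)) (hsa.congr (fun n => (hGq n).symm))
    have hFpsum : (∑' n : ℕ, F n ^ p) = J := tsum_congr hFp
    have hGqsum : (∑' n : ℕ, G n ^ q) = A := tsum_congr hGq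
    rw [hFpsum, hGqsum] at hFGle
    have hLket : ∀ n : ℕ,
        (∫ x in Set.Ioi (0:ℝ), Ker18 μ Vt ρ α γ δ x (n+1) * a (n+1) * f x)
          = a (n+1) * c (n+1) := by
      intro n
      have hre : (fun x => Ker18 μ Vt ρ α γ δ x (n+1) * a (n+1) * f x)
          = fun x => a (n+1) * (Ker18 μ Vt ρ α γ δ x (n+1) * f x) := by
        funext x
        ring
      rw [hre, MeasureTheory.integral_const_mul]
    have hApos : 0 < A ^ (1/q) := Real.rpow_pos_of_pos hpa _
    calc (∑' n : ℕ, ∫ x in Set.Ioi (0:ℝ), Ker18 μ Vt ρ α γ δ x (n+1) * a (n+1) * f x)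
        = ∑' n : ℕ, F n * G n := by
          apply tsum_congr
          intro n
          rw [hLket n, hFG n]
    _ ≤ J ^ (1/p) * A ^ (1/q) := hFGle
    _ < (k * I ^ (1/p)) * A ^ (1/q) := mul_lt_mul_of_pos_right hmain hApos
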